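/- Let A be an N×N matrix over {0,1} and Ω_A the associated one-sided subshift. With E = {}_{id}C(Ω_A)_{σ*} and the Pimsner six-term exact sequence in K-homology for O_A ≅ O_E over C(Ω_A), using that K¹(C(Ω_A)) = 0 (Ω_A is totally disconnected compact), the sequence reduces to the four-term exact sequence 0 → K⁰(O_A) → K⁰(C(Ω_A)) → K⁰(C(Ω_A)) → K¹(O_A) → 0, where the middle map is 1 - [E]. Identifying K⁰(C(Ω_A)) with Hom(C(Ω_A,ℤ), ℤ) and [E] with the dual of the transfer operator, one obtains K¹(O_A) ≅ ℤ^N / (1 - Aᵀ)ℤ^N. As a purely algebraic consequence: the cokernel of the map (1 - 𝔏*) : Hom(C(Ω_A,ℤ),ℤ) → Hom(C(Ω_A,ℤ),ℤ) is isomorphic to ℤ^N/(1-A)ℤ^N. -/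

import Mathlib

namespace Stmt15

variable (N : ℕ) (A : Fin N → Fin N → Bool)

/-- The one-sided subshift of finite type Ω_A. -/
def Omega : Type := {x : ℕ → Fin N // ∀ i, A (x i) (x (i + 1)) = true}

instance : TopologicalSpace (Omega N A) :=
  instTopologicalSpaceSubtype

/-- Prepending an admissible letter to a point of Ω_A (the preimages of `x` under the
shift σ are exactly the points `cons j x h`). -/
def cons (j : Fin N) (x : Omega N A) (h : A j (x.1 0) = true) : Omega N A :=
  ⟨fun i => Nat.rec j (fun i _ => x.1 i) i, by
    intro i
    cases i with
    | zero => exact h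
    | succ i => exact x.2 i⟩

/- auxiliary definitions and lemmas -/
attribute [local instance] Classical.propDecidable

lemma isClosed_omega : IsClosed {x : ℕ → Fin N | ∀ i, A (x i) (x (i+1)) = true} := by
  have h : {x : ℕ → Fin N | ∀ i, A (x i) (x (i+1)) = true}
      = ⋂ i, ((fun x : ℕ → Fin N => (x i, x (i+1))) ⁻¹' {p | A p.1 p.2 = true}) := by
    ext x; simp [Set.mem_iInter]
  rw [h]
  exact isClosed_iInter fun i =>
    (isClosed_discrete _).preimage ((continuous_apply i).prodMk (continuous_apply (i+1)))

instance : CompactSpace (Omega N A) :=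
  isCompact_iff_compactSpace.mp ((isClosed_omega N A).isCompact)

def rho (n : ℕ) (x : Omega N A) : Fin n → Fin N := fun k => x.1 k

lemma continuous_rho (n : ℕ) : Continuous (rho N A n) :=
  continuous_pi fun k => (continuous_apply (k : ℕ)).comp continuous_subtype_val

noncomputable def chi (n : ℕ) (w : Fin n → Fin N) : LocallyConstant (Omega N A) ℤ :=
  ⟨fun x => if rho N A n x = w then 1 else 0, by
    intro s
    have h : (fun x => if rho N A n x = w then (1:ℤ) else 0) ⁻¹' s
        = rho N A n ⁻¹' ((fun v => if v = w then (1:ℤ) else 0) ⁻¹' s) := rfl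
    rw [h]
    exact (continuous_rho N A n).isOpen_preimage _ (isOpen_discrete _)⟩

lemma chi_apply (n : ℕ) (w : Fin n → Fin N) (x : Omega N A) :
    chi N A n w x = if rho N A n x = w then 1 else 0 := rfl

def IsLev (f : LocallyConstant (Omega N A) ℤ) (n : ℕ) : Prop :=
  ∀ x y : Omega N A, (∀ k, k < n → x.1 k = y.1 k) → f x = f y

lemma isLev_mono {f : LocallyConstant (Omega N A) ℤ} {n m : ℕ} (h : IsLev N A f n)
    (hnm : n ≤ m) : IsLev N A f m :=
  fun x y hxy => h x y fun k hk => hxy k (lt_of_lt_of_le hk hnm)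

lemma exists_isLev (f : LocallyConstant (Omega N A) ℤ) : ∃ n, IsLev N A f n := by
  -- each point has a cylinder neighborhood on which f is constant
  have hnb : ∀ x : Omega N A, ∃ m : ℕ, ∀ y : Omega N A,
      (∀ k, k < m → y.1 k = x.1 k) → f y = f x := by
    intro x
    have hU : IsOpen (f ⁻¹' {f x}) := f.2 _
    replace hU := isOpen_induced_iff.mp hU
    obtain ⟨V, hV, hVf⟩ := hU
    have hxV : x.1 ∈ V := by
      have : x ∈ f ⁻¹' {f x} := rfl
      rw [← hVf] at this; exact this
    obtain ⟨I, u, hIu, hsub⟩ := (isOpen_pi_iff.mp hV) x.1 hxV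
    refine ⟨(I.sup id) + 1, fun y hy => ?_⟩
    have hyV : y.1 ∈ V := by
      apply hsub
      intro i hi
      have : y.1 i = x.1 i := hy i (by
        have : i ≤ I.sup id := Finset.le_sup (f := id) hi
        omega)
      rw [this]
      exact (hIu i hi).2
    have : y ∈ f ⁻¹' {f x} := by rw [← hVf]; exact hyV
    exact this
  classical
  choose m hm using hnb
  -- cylinder sets are open
  have hopen : ∀ x : Omega N A, IsOpen {y : Omega N A | ∀ k, k < m x → y.1 k = x.1 k} := by
    intro x
    have h : {y : Omega N A | ∀ k, k < m x → y.1 k = x.1 k}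
        = rho N A (m x) ⁻¹' {rho N A (m x) x} := by
      ext y
      simp only [Set.mem_setOf_eq, Set.mem_preimage, Set.mem_singleton_iff, funext_iff, rho]
      constructor
      · intro h k; exact h k k.2
      · intro h k hk; exact h ⟨k, hk⟩
    rw [h]
    exact (continuous_rho N A (m x)).isOpen_preimage _ (isOpen_discrete _)
  obtain ⟨t, ht⟩ := isCompact_univ.elim_finite_subcover
    (fun x : Omega N A => {y : Omega N A | ∀ k, k < m x → y.1 k = x.1 k}) hopen
    (fun x _ => Set.mem_iUnion.mpr ⟨x, fun k _ => rfl⟩)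
  refine ⟨t.sup m, fun x y hxy => ?_⟩
  obtain ⟨z, hz, hxz⟩ := Set.mem_iUnion₂.mp (ht (Set.mem_univ x))
  have hmz : m z ≤ t.sup m := Finset.le_sup hz
  have hyz : ∀ k, k < m z → y.1 k = z.1 k := fun k hk => by
    rw [← hxz k hk]; exact (hxy k (lt_of_lt_of_le hk hmz)).symm
  rw [hm z x hxz, hm z y hyz]

lemma lcsum {ι : Type} (s : Finset ι) (g : ι → LocallyConstant (Omega N A) ℤ) (x : Omega N A) :
    (∑ w ∈ s, g w) x = ∑ w ∈ s, g w x := by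
  classical
  induction s using Finset.induction with
  | empty => rfl
  | @insert a s ha ih =>
      rw [Finset.sum_insert ha, Finset.sum_insert ha, LocallyConstant.add_apply, ih]

def Live (i : Fin N) : Prop := ∃ x : Omega N A, x.1 0 = i

def LiveW (n : ℕ) (w : Fin n → Fin N) : Prop := ∃ x : Omega N A, rho N A n x = w

def Ext (n : ℕ) (i : Fin N) : Prop :=
  ∃ w : ℕ → Fin N, w 0 = i ∧ ∀ k, k < n → A (w k) (w (k+1)) = true

noncomputable def dlev (i : Fin N) : ℕ := sInf {n | ¬ Ext N A n i}

def shiftPt (x : Omega N A) (n : ℕ) : Omega N A :=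
  ⟨fun m => x.1 (n + m), fun m => x.2 (n + m)⟩

lemma liveW_iff (n : ℕ) (w : Fin (n+1) → Fin N) :
    LiveW N A (n+1) w ↔
      ((∀ k : Fin n, A (w k.castSucc) (w k.succ) = true) ∧ Live N A (w (Fin.last n))) := by
  constructor
  · rintro ⟨x, hx⟩
    have hx' : ∀ j : Fin (n+1), x.1 j = w j := fun j => congrFun hx j
    constructor
    · intro k
      have h1 : x.1 (k : ℕ) = w k.castSucc := by simpa using hx' k.castSucc
      have h2 : x.1 ((k : ℕ)+1) = w k.succ := by simpa using hx' k.succ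
      rw [← h1, ← h2]; exact x.2 k
    · refine ⟨shiftPt N A x n, ?_⟩
      show x.1 (n + 0) = w (Fin.last n)
      simpa using hx' (Fin.last n)
  · rintro ⟨hadm, x, hx0⟩
    refine ⟨⟨fun m => if h : m ≤ n then w ⟨m, by omega⟩ else x.1 (m - n), ?_⟩, ?_⟩
    · intro m
      dsimp only
      rcases lt_trichotomy m n with h | h | h
      · rw [dif_pos (by omega : m ≤ n), dif_pos (by omega : m + 1 ≤ n)]
        have hh := hadm ⟨m, h⟩
        have e1 : (⟨m, h⟩ : Fin n).castSucc = (⟨m, by omega⟩ : Fin (n+1)) := by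
          apply Fin.ext; simp
        have e2 : (⟨m, h⟩ : Fin n).succ = (⟨m + 1, by omega⟩ : Fin (n+1)) := by
          apply Fin.ext; simp
        rwa [e1, e2] at hh
      · subst h
        rw [dif_pos (le_refl m), dif_neg (by omega)]
        have e : m + 1 - m = 1 := by omega
        rw [e]
        have e2 : (⟨m, by omega⟩ : Fin (m+1)) = Fin.last m := by apply Fin.ext; simp
        rw [e2, ← hx0]
        exact x.2 0
      · rw [dif_neg (by omega), dif_neg (by omega)]
        have e : m + 1 - n = (m - n) + 1 := by omega
        rw [e]
        exact x.2 (m - n)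
    · funext j
      show (if h : (j : ℕ) ≤ n then w ⟨(j : ℕ), by omega⟩ else _) = w j
      rw [dif_pos (by omega : (j : ℕ) ≤ n)]

lemma ext_zero (i : Fin N) : Ext N A 0 i :=
  ⟨fun _ => i, rfl, fun k hk => absurd hk (by omega)⟩

lemma ext_succ {i j : Fin N} (hA : A i j = true) {m : ℕ} (h : Ext N A m j) :
    Ext N A (m+1) i := by
  obtain ⟨w, hw0, hadm⟩ := h
  refine ⟨fun k => Nat.rec i (fun k _ => w k) k, rfl, ?_⟩
  intro k hk
  cases k with
  | zero => show A i (w 0) = true; rw [hw0]; exact hA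
  | succ k => exact hadm k (by omega)

lemma pump (i : Fin N) (h : Ext N A N i) : Live N A i := by
  obtain ⟨w, hw0, hadm⟩ := h
  have main : ∀ p q : ℕ, p < q → q ≤ N → w p = w q → Live N A i := by
    intro p q hpq hqN hwpq
    set r := q - p with hrdef
    have hr0 : 0 < r := by omega
    refine ⟨⟨fun k => if k < p then w k else w (p + (k - p) % r), ?_⟩, ?_⟩
    · intro m
      dsimp only
      by_cases h1 : m + 1 < p
      · rw [if_pos (by omega), if_pos h1]; exact hadm m (by omega)
      by_cases h2 : m + 1 = p
      · rw [if_pos (by omega), if_neg (by omega)]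
        have e : (m + 1 - p) % r = 0 := by
          rw [h2, Nat.sub_self]; exact Nat.zero_mod r
        rw [e, Nat.add_zero, ← h2]
        exact hadm m (by omega)
      -- p ≤ m
      have hpm : p ≤ m := by omega
      rw [if_neg (by omega), if_neg (by omega)]
      set s := (m - p) % r with hs
      have hsr : s < r := Nat.mod_lt _ hr0
      have hm1 : m + 1 - p = (m - p) + 1 := by omega
      by_cases hone : r = 1
      · have e0 : s = 0 := by rw [hs, hone]; exact Nat.mod_one _
        have e1 : (m + 1 - p) % r = 0 := by rw [hone]; exact Nat.mod_one _
        rw [e1, e0, Nat.add_zero]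
        have h3 : A (w p) (w q) = true := by
          have := hadm p (by omega)
          rwa [show p + 1 = q by omega] at this
        rwa [← hwpq] at h3
      · have h1r : 1 % r = 1 := Nat.mod_eq_of_lt (by omega)
        have key : (m + 1 - p) % r = (s + 1) % r := by
          rw [hm1, Nat.add_mod, h1r, ← hs]
        by_cases hlt2 : s + 1 < r
        · rw [key, Nat.mod_eq_of_lt hlt2]
          have e : p + (s + 1) = (p + s) + 1 := by omega
          rw [e]
          exact hadm (p + s) (by omega)
        · have hse : s + 1 = r := by omega
          rw [key, hse, Nat.mod_self, Nat.add_zero]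
          have h3 : A (w (p + s)) (w q) = true := by
            have := hadm (p + s) (by omega)
            rwa [show p + s + 1 = q by omega] at this
          rwa [← hwpq] at h3
    · show (if 0 < p then w 0 else w (p + (0 - p) % r)) = i
      by_cases hp : 0 < p
      · rw [if_pos hp]; exact hw0
      · have hp0 : p = 0 := by omega
        rw [if_neg hp, hp0]
        simpa using hw0
  obtain ⟨s, t, hst, hw⟩ := Fintype.exists_ne_map_eq_of_card_lt
    (fun t : Fin (N+1) => w t) (by simp)
  have hvne : (s : ℕ) ≠ (t : ℕ) := fun h => hst (Fin.ext h)
  rcases Nat.lt_or_ge (s : ℕ) (t : ℕ) with hlt | hge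
  · exact main s t hlt (by omega) hw
  · exact main t s (by omega) (by omega) hw.symm

lemma dead_notExtN {i : Fin N} (h : ¬ Live N A i) : ¬ Ext N A N i :=
  fun he => h (pump N A i he)

lemma dead_dlev_le {i : Fin N} (h : ¬ Live N A i) : dlev N A i ≤ N :=
  Nat.sInf_le (dead_notExtN N A h)

lemma dlev_spec {i : Fin N} (h : ¬ Live N A i) : ¬ Ext N A (dlev N A i) i := by
  have h2 : {n | ¬ Ext N A n i}.Nonempty := ⟨N, dead_notExtN N A h⟩
  exact Nat.sInf_mem h2

lemma dead_dlev_pos {i : Fin N} (h : ¬ Live N A i) : 0 < dlev N A i := by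
  rcases Nat.eq_zero_or_pos (dlev N A i) with h0 | h0
  · exact absurd (h0 ▸ dlev_spec N A h) (not_not_intro (ext_zero N A i))
  · exact h0

lemma ext_of_lt {i : Fin N} {m : ℕ} (h : m < dlev N A i) : Ext N A m i :=
  not_not.mp (Nat.notMem_of_lt_sInf h)

lemma succ_dead {i j : Fin N} (hi : ¬ Live N A i) (hA : A i j = true) : ¬ Live N A j := by
  rintro ⟨x, hx0⟩
  exact hi ⟨cons N A i x (by rw [hx0]; exact hA), rfl⟩

lemma succ_dlev {i j : Fin N} (hi : ¬ Live N A i) (hA : A i j = true) :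
    dlev N A j < dlev N A i := by
  have hj : ¬ Live N A j := succ_dead N A hi hA
  have hle : dlev N A j ≤ dlev N A i - 1 := by
    apply Nat.sInf_le
    intro he
    exact dlev_spec N A hi (by
      have := ext_succ N A hA he
      rwa [show dlev N A i - 1 + 1 = dlev N A i by
        have := dead_dlev_pos N A hi; omega] at this)
  have := dead_dlev_pos N A hi
  omega

lemma pred_dlev {i j : Fin N} (hi : ¬ Live N A i) (hj : ¬ Live N A j) (hA : A j i = true) :
    dlev N A i < dlev N A j := by
  by_contra hcon
  push_neg at hcon
  have hj1 : 0 < dlev N A j := dead_dlev_pos N A hj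
  have he : Ext N A (dlev N A j - 1) i := ext_of_lt N A (by omega)
  have := ext_succ N A hA he
  rw [show dlev N A j - 1 + 1 = dlev N A j by omega] at this
  exact dlev_spec N A hj this

lemma tail_snoc {n : ℕ} (w : Fin (n+1) → Fin N) (a : Fin N) :
    Fin.tail (Fin.snoc w a : Fin (n+2) → Fin N)
      = (Fin.snoc (n := n) (Fin.tail w) a : Fin (n+1) → Fin N) := by
  funext k
  refine Fin.lastCases ?_ ?_ k
  · show (Fin.snoc w a : Fin (n+2) → Fin N) (Fin.last n).succ
        = (Fin.snoc (n := n) (Fin.tail w) a : Fin (n+1) → Fin N) (Fin.last n)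
    rw [Fin.succ_last, Fin.snoc_last, Fin.snoc_last]
  · intro j
    show (Fin.snoc w a : Fin (n+2) → Fin N) (j.castSucc).succ
        = (Fin.snoc (n := n) (Fin.tail w) a : Fin (n+1) → Fin N) j.castSucc
    rw [Fin.succ_castSucc, Fin.snoc_castSucc, Fin.snoc_castSucc]
    rfl

lemma adm_snoc {n : ℕ} (w : Fin (n+1) → Fin N) (a : Fin N) :
    (∀ k : Fin (n+1), A ((Fin.snoc w a : Fin (n+2) → Fin N) k.castSucc)
        ((Fin.snoc w a : Fin (n+2) → Fin N) k.succ) = true) ↔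
      ((∀ k : Fin n, A (w k.castSucc) (w k.succ) = true) ∧ A (w (Fin.last n)) a = true) := by
  constructor
  · intro h
    constructor
    · intro k
      have hk := h k.castSucc
      rwa [Fin.snoc_castSucc, Fin.succ_castSucc, Fin.snoc_castSucc] at hk
    · have hk := h (Fin.last n)
      rwa [Fin.snoc_castSucc, Fin.succ_last, Fin.snoc_last] at hk
  · rintro ⟨h1, h2⟩ k
    refine Fin.lastCases ?_ ?_ k
    · rwa [Fin.snoc_castSucc, Fin.succ_last, Fin.snoc_last]
    · intro j
      rw [Fin.snoc_castSucc, Fin.succ_castSucc, Fin.snoc_castSucc]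
      exact h1 j

lemma live_of_succ_live {i a : Fin N} (hA : A i a = true) (ha : Live N A a) :
    Live N A i := by
  obtain ⟨x, hx0⟩ := ha
  exact ⟨cons N A i x (by rw [hx0]; exact hA), rfl⟩

lemma liveW_snoc_iff {n : ℕ} (w : Fin (n+1) → Fin N) (a : Fin N) :
    LiveW N A (n+2) (Fin.snoc w a) ↔
      (LiveW N A (n+1) w ∧ A (w (Fin.last n)) a = true ∧ Live N A a) := by
  rw [liveW_iff, liveW_iff, adm_snoc, Fin.snoc_last]
  constructor
  · rintro ⟨⟨h1, h2⟩, h3⟩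
    exact ⟨⟨h1, live_of_succ_live N A h2 h3⟩, h2, h3⟩
  · rintro ⟨⟨h1, _⟩, h2, h3⟩
    exact ⟨⟨h1, h2⟩, h3⟩

lemma liveW_one_iff (w : Fin 1 → Fin N) : LiveW N A 1 w ↔ Live N A (w 0) := by
  rw [liveW_iff]
  have h0 : Fin.last 0 = 0 := rfl
  constructor
  · rintro ⟨-, h⟩; rwa [h0] at h
  · intro h; exact ⟨fun k => k.elim0, by rwa [h0]⟩

lemma liveW_snoc_one_iff (w : Fin 0 → Fin N) (a : Fin N) :
    LiveW N A 1 (Fin.snoc w a) ↔ Live N A a := by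
  rw [liveW_one_iff]
  have : (Fin.snoc w a : Fin 1 → Fin N) 0 = a := by
    have h0 : (0 : Fin 1) = Fin.last 0 := rfl
    rw [h0, Fin.snoc_last]
  rw [this]

lemma rho_succ_iff {n : ℕ} (w : Fin n → Fin N) (a : Fin N) (x : Omega N A) :
    rho N A (n+1) x = Fin.snoc w a ↔ (rho N A n x = w ∧ x.1 n = a) := by
  constructor
  · intro h
    have h' : ∀ j : Fin (n+1), x.1 (j : ℕ) = (Fin.snoc w a : Fin (n+1) → Fin N) j :=
      fun j => congrFun h j
    constructor
    · funext k
      have hk := h' k.castSucc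
      rw [Fin.snoc_castSucc] at hk
      simpa [rho] using hk
    · have hk := h' (Fin.last n)
      rwa [Fin.snoc_last] at hk
  · rintro ⟨h1, h2⟩
    funext j
    refine Fin.lastCases ?_ ?_ j
    · rw [Fin.snoc_last]
      exact h2
    · intro k
      rw [Fin.snoc_castSucc]
      have := congrFun h1 k
      simpa [rho] using this

lemma liveW_of_snoc {n : ℕ} {w : Fin n → Fin N} {a : Fin N}
    (h : LiveW N A (n+1) (Fin.snoc w a)) : LiveW N A n w := by
  obtain ⟨x, hx⟩ := h
  exact ⟨x, ((rho_succ_iff N A w a x).mp hx).1⟩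

lemma sum_snoc (n : ℕ) (F : (Fin (n+1) → Fin N) → ℤ) :
    ∑ v : Fin (n+1) → Fin N, F v = ∑ w : Fin n → Fin N, ∑ a : Fin N, F (Fin.snoc w a) := by
  let e : ((Fin n → Fin N) × Fin N) ≃ (Fin (n+1) → Fin N) :=
    ⟨fun p => Fin.snoc p.1 p.2, fun v => (Fin.init v, v (Fin.last n)),
     fun p => by simp only [Fin.init_snoc, Fin.snoc_last],
     fun v => by simp only [Fin.snoc_init_self]⟩
  rw [← Equiv.sum_comp e F, Fintype.sum_prod_type]
  exact Finset.sum_congr rfl fun w _ => Finset.sum_congr rfl fun a _ => rfl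

lemma chi_sum (n : ℕ) (w : Fin n → Fin N) :
    chi N A n w = ∑ a : Fin N, chi N A (n+1) (Fin.snoc w a) := by
  ext x
  rw [lcsum]
  simp only [chi_apply]
  by_cases h : rho N A n x = w
  · rw [if_pos h]
    have : ∀ a : Fin N, (if rho N A (n+1) x = Fin.snoc w a then (1:ℤ) else 0)
        = if x.1 n = a then 1 else 0 := by
      intro a
      by_cases ha : x.1 n = a
      · rw [if_pos ((rho_succ_iff N A w a x).mpr ⟨h, ha⟩), if_pos ha]
      · rw [if_neg (fun hc => ha ((rho_succ_iff N A w a x).mp hc).2), if_neg ha]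
    rw [Finset.sum_congr rfl (fun a _ => this a)]
    simp
  · rw [if_neg h]
    symm
    apply Finset.sum_eq_zero
    intro a _
    rw [if_neg (fun hc => h ((rho_succ_iff N A w a x).mp hc).1)]

lemma last0 : Fin.last 0 = (0 : Fin 1) := rfl

lemma snoc_zero (w : Fin 0 → Fin N) (a : Fin N) :
    (Fin.snoc w a : Fin 1 → Fin N) 0 = a := by
  rw [← last0, Fin.snoc_last]

lemma tail_last {n : ℕ} (w : Fin (n+2) → Fin N) :
    Fin.tail w (Fin.last n) = w (Fin.last (n+1)) := by
  show w (Fin.last n).succ = _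
  rw [Fin.succ_last]

lemma chi_dead_eq_zero (n : ℕ) (w : Fin n → Fin N) (h : ¬ LiveW N A n w) :
    chi N A n w = 0 := by
  ext x
  rw [chi_apply, if_neg (fun hc => h ⟨x, hc⟩)]
  rfl

section Psi

variable (φ : LocallyConstant (Omega N A) ℤ →+ ℤ) (u : Fin N → ℤ)

noncomputable def Psi : (n : ℕ) → (Fin n → Fin N) → ℤ
  | 0, _ => ∑ a, u a
  | 1, w => u (w 0)
  | (n+2), w =>
      if LiveW N A (n+2) w then Psi (n+1) (Fin.tail w) + φ (chi N A (n+2) w) else 0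

lemma psi_zero (w : Fin 0 → Fin N) : Psi N A φ u 0 w = ∑ a, u a := by rw [Psi]

lemma psi_one (w : Fin 1 → Fin N) : Psi N A φ u 1 w = u (w 0) := by rw [Psi]

lemma psi_two (n : ℕ) (w : Fin (n+2) → Fin N) :
    Psi N A φ u (n+2) w
      = if LiveW N A (n+2) w then Psi N A φ u (n+1) (Fin.tail w) + φ (chi N A (n+2) w)
        else 0 := by
  rw [Psi]

lemma psi_not_live (hud : ∀ i, ¬ Live N A i → u i = 0) (n : ℕ)
    (w : Fin (n+1) → Fin N) (h : ¬ LiveW N A (n+1) w) : Psi N A φ u (n+1) w = 0 := by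
  cases n with
  | zero =>
      rw [psi_one]
      exact hud (w 0) (fun hl => h ((liveW_one_iff N A w).mpr hl))
  | succ n =>
      rw [psi_two, if_neg h]

lemma psi_compat (hud : ∀ i, ¬ Live N A i → u i = 0)
    (hTu : ∀ i, u i - ∑ k, (if A i k = true then (1:ℤ) else 0) * u k
      = φ (chi N A 1 (fun _ => i))) :
    ∀ (n : ℕ) (w : Fin n → Fin N),
      Psi N A φ u n w = ∑ a, Psi N A φ u (n+1) (Fin.snoc w a)
  | 0, w => by
      rw [psi_zero]
      refine Finset.sum_congr rfl fun a _ => ?_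
      rw [psi_one, snoc_zero]
  | 1, w => by
      have hw : w = fun _ => w 0 := by
        funext k
        have hk : k = 0 := Subsingleton.elim k 0
        rw [hk]
      by_cases hlw : LiveW N A 1 w
      · have hterm : ∀ a : Fin N, Psi N A φ u 2 (Fin.snoc w a)
            = (if A (w 0) a = true then (1:ℤ) else 0) * u a
              + φ (chi N A 2 (Fin.snoc w a)) := by
          intro a
          by_cases hc : LiveW N A 2 (Fin.snoc w a)
          · obtain ⟨-, hA, hl⟩ := (liveW_snoc_iff N A w a).mp hc
            rw [last0] at hA
            rw [psi_two, if_pos hc, tail_snoc, psi_one, snoc_zero, if_pos hA, one_mul]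
          · rw [psi_two, if_neg hc, chi_dead_eq_zero N A _ _ hc, map_zero, add_zero]
            have hcond : ¬ (A (w 0) a = true ∧ Live N A a) := by
              rintro ⟨h1, h2⟩
              rw [← last0] at h1
              exact hc ((liveW_snoc_iff N A w a).mpr ⟨hlw, h1, h2⟩)
            by_cases hA : A (w 0) a = true
            · rw [if_pos hA, one_mul, hud a (fun hl => hcond ⟨hA, hl⟩)]
            · rw [if_neg hA, zero_mul]
        rw [Finset.sum_congr rfl fun a _ => hterm a, Finset.sum_add_distrib, ← map_sum,
          ← chi_sum, psi_one]
        rw [show chi N A 1 w = chi N A 1 (fun _ => w 0) by rw [← hw]]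
        linarith [hTu (w 0)]
      · rw [psi_one, hud (w 0) (fun hl => hlw ((liveW_one_iff N A w).mpr hl))]
        symm
        apply Finset.sum_eq_zero
        intro a _
        rw [psi_two, if_neg (fun hc => hlw (liveW_of_snoc N A hc))]
  | (n+2), w => by
      by_cases hlw : LiveW N A (n+2) w
      · have hterm : ∀ a, Psi N A φ u (n+3) (Fin.snoc w a)
            = (if (A (w (Fin.last (n+1))) a = true ∧ Live N A a) then
                Psi N A φ u (n+2) (Fin.snoc (Fin.tail w) a) else 0)
              + φ (chi N A (n+3) (Fin.snoc w a)) := by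
          intro a
          by_cases hc : LiveW N A (n+3) (Fin.snoc w a)
          · obtain ⟨-, hA, hl⟩ := (liveW_snoc_iff N A w a).mp hc
            have hcond' : A (w (Fin.last (n+1))) a = true ∧ Live N A a := ⟨hA, hl⟩
            rw [psi_two, if_pos hc, tail_snoc, if_pos hcond']
          · rw [psi_two, if_neg hc, chi_dead_eq_zero N A _ _ hc, map_zero, add_zero]
            have hcond : ¬ (A (w (Fin.last (n+1))) a = true ∧ Live N A a) :=
              fun hp => hc ((liveW_snoc_iff N A w a).mpr ⟨hlw, hp.1, hp.2⟩)
            rw [if_neg hcond]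
        have hterm2 : ∀ a, (if (A (w (Fin.last (n+1))) a = true ∧ Live N A a) then
                Psi N A φ u (n+2) (Fin.snoc (Fin.tail w) a) else 0)
            = Psi N A φ u (n+2) (Fin.snoc (Fin.tail w) a) := by
          intro a
          by_cases hcond : (A (w (Fin.last (n+1))) a = true ∧ Live N A a)
          · rw [if_pos hcond]
          · rw [if_neg hcond]
            symm
            apply psi_not_live
            · exact hud
            · intro hc2
              obtain ⟨h1, h2, h3⟩ := (liveW_snoc_iff N A (Fin.tail w) a).mp hc2
              rw [tail_last] at h2
              exact hcond ⟨h2, h3⟩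
        rw [Finset.sum_congr rfl fun a _ => hterm a, Finset.sum_add_distrib,
          Finset.sum_congr rfl fun a _ => hterm2 a,
          ← psi_compat hud hTu (n+1) (Fin.tail w), ← map_sum, ← chi_sum, psi_two,
          if_pos hlw]
      · rw [psi_two, if_neg hlw]
        symm
        apply Finset.sum_eq_zero
        intro a _
        rw [psi_two, if_neg (fun hc => hlw (liveW_of_snoc N A hc))]

end Psi

noncomputable def pt {n : ℕ} {w : Fin n → Fin N} (h : LiveW N A n w) : Omega N A :=
  h.choose

lemma pt_spec {n : ℕ} {w : Fin n → Fin N} (h : LiveW N A n w) :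
    rho N A n (pt N A h) = w := h.choose_spec

noncomputable def val (f : LocallyConstant (Omega N A) ℤ) (n : ℕ) (w : Fin n → Fin N) : ℤ :=
  if h : LiveW N A n w then f (pt N A h) else 0

lemma val_add (f g : LocallyConstant (Omega N A) ℤ) (n : ℕ) (w : Fin n → Fin N) :
    val N A (f + g) n w = val N A f n w + val N A g n w := by
  unfold val
  by_cases h : LiveW N A n w
  · rw [dif_pos h, dif_pos h, dif_pos h, LocallyConstant.add_apply]
  · rw [dif_neg h, dif_neg h, dif_neg h, add_zero]

lemma isLev_agree {f : LocallyConstant (Omega N A) ℤ} {n : ℕ} (hf : IsLev N A f n)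
    {x y : Omega N A} (h : rho N A n x = rho N A n y) : f x = f y := by
  apply hf
  intro k hk
  exact congrFun h ⟨k, hk⟩

lemma val_snoc {f : LocallyConstant (Omega N A) ℤ} {n : ℕ} (hf : IsLev N A f n)
    (w : Fin n → Fin N) (a : Fin N) (h : LiveW N A (n+1) (Fin.snoc w a)) :
    f (pt N A h) = val N A f n w := by
  have h1 : rho N A n (pt N A h) = w :=
    ((rho_succ_iff N A w a (pt N A h)).mp (pt_spec N A h)).1
  have hw : LiveW N A n w := ⟨pt N A h, h1⟩
  unfold val
  rw [dif_pos hw]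
  exact isLev_agree N A hf (by rw [h1, pt_spec N A hw])

noncomputable def psiAt (φ : LocallyConstant (Omega N A) ℤ →+ ℤ) (u : Fin N → ℤ)
    (f : LocallyConstant (Omega N A) ℤ) (n : ℕ) : ℤ :=
  ∑ w : Fin n → Fin N, Psi N A φ u n w * val N A f n w

noncomputable def lev (f : LocallyConstant (Omega N A) ℤ) : ℕ :=
  Nat.find (exists_isLev N A f)

lemma lev_spec (f : LocallyConstant (Omega N A) ℤ) : IsLev N A f (lev N A f) :=
  Nat.find_spec (exists_isLev N A f)

noncomputable def psiF (φ : LocallyConstant (Omega N A) ℤ →+ ℤ) (u : Fin N → ℤ)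
    (f : LocallyConstant (Omega N A) ℤ) : ℤ :=
  psiAt N A φ u f (lev N A f)

section PsiLemmas

variable (φ : LocallyConstant (Omega N A) ℤ →+ ℤ) (u : Fin N → ℤ)
variable (hud : ∀ i, ¬ Live N A i → u i = 0)
variable (hTu : ∀ i, u i - ∑ k, (if A i k = true then (1:ℤ) else 0) * u k
      = φ (chi N A 1 (fun _ => i)))

include hud hTu

lemma psiAt_step {f : LocallyConstant (Omega N A) ℤ} {n : ℕ} (hf : IsLev N A f n) :
    psiAt N A φ u f n = psiAt N A φ u f (n+1) := by
  unfold psiAt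
  rw [sum_snoc]
  refine Finset.sum_congr rfl fun w _ => ?_
  have hterm : ∀ a : Fin N,
      Psi N A φ u (n+1) (Fin.snoc w a) * val N A f (n+1) (Fin.snoc w a)
        = Psi N A φ u (n+1) (Fin.snoc w a) * val N A f n w := by
    intro a
    by_cases h : LiveW N A (n+1) (Fin.snoc w a)
    · unfold val
      rw [dif_pos h]
      rw [val_snoc N A hf w a h]
      rfl
    · rw [psi_not_live N A φ u hud n _ h, zero_mul, zero_mul]
  rw [Finset.sum_congr rfl fun a _ => hterm a, ← Finset.sum_mul,
    ← psi_compat N A φ u hud hTu n w]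

lemma psiAt_eq {f : LocallyConstant (Omega N A) ℤ} {n : ℕ} (hf : IsLev N A f n) :
    psiAt N A φ u f n = psiF N A φ u f := by
  have hle : lev N A f ≤ n := Nat.find_min' (exists_isLev N A f) hf
  have H : ∀ m, lev N A f ≤ m → psiAt N A φ u f m = psiF N A φ u f := by
    intro m hm
    induction m, hm using Nat.le_induction with
    | base => rfl
    | succ m hm ih =>
        rw [← psiAt_step N A φ u hud hTu (isLev_mono N A (lev_spec N A f) hm), ih]
  exact H n hle

omit hud hTu in
lemma isLev_chi (n : ℕ) (w : Fin n → Fin N) : IsLev N A (chi N A n w) n := by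
  intro x y h
  rw [chi_apply, chi_apply]
  have e : rho N A n x = rho N A n y := by
    funext k
    exact h k k.2
  rw [e]

lemma psiF_chi (n : ℕ) (w : Fin (n+1) → Fin N) :
    psiF N A φ u (chi N A (n+1) w) = Psi N A φ u (n+1) w := by
  rw [← psiAt_eq N A φ u hud hTu (isLev_chi N A (n+1) w)]
  unfold psiAt
  rw [Finset.sum_eq_single w]
  · unfold val
    by_cases h : LiveW N A (n+1) w
    · rw [dif_pos h, chi_apply, pt_spec N A h, if_pos rfl, mul_one]
    · rw [dif_neg h, mul_zero, psi_not_live N A φ u hud n w h]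
  · intro w' _ hne
    unfold val
    by_cases h : LiveW N A (n+1) w'
    · rw [dif_pos h, chi_apply, pt_spec N A h, if_neg hne, mul_zero]
    · rw [dif_neg h, mul_zero]
  · intro habs
    exact absurd (Finset.mem_univ w) habs

end PsiLemmas

lemma decomp (f : LocallyConstant (Omega N A) ℤ) {n : ℕ} (hf : IsLev N A f n) :
    f = ∑ w : Fin n → Fin N, val N A f n w • chi N A n w := by
  ext x
  rw [lcsum]
  have hterm : ∀ w : Fin n → Fin N,
      (val N A f n w • chi N A n w) x = val N A f n w * (if rho N A n x = w then 1 else 0) := by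
    intro w
    rw [LocallyConstant.smul_apply, chi_apply, smul_eq_mul]
  rw [Finset.sum_congr rfl fun w _ => hterm w, Finset.sum_eq_single (rho N A n x)]
  · rw [if_pos rfl, mul_one]
    unfold val
    have h : LiveW N A n (rho N A n x) := ⟨x, rfl⟩
    rw [dif_pos h]
    exact (isLev_agree N A hf (pt_spec N A h)).symm
  · intro w _ hne
    rw [if_neg (fun hh => hne hh.symm), mul_zero]
  · intro habs
    exact absurd (Finset.mem_univ _) habs

lemma chi_one_eta (w : Fin 1 → Fin N) : chi N A 1 w = chi N A 1 (fun _ => w 0) := by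
  have hw : w = fun _ => w 0 := funext fun k => by rw [Subsingleton.elim k 0]
  rw [← hw]

lemma cast0 (m : ℕ) : ((0 : Fin (m+1)).castSucc) = (0 : Fin (m+2)) := by
  apply Fin.ext; simp

lemma succ0 (m : ℕ) : ((0 : Fin (m+1)).succ) = (1 : Fin (m+2)) := by
  apply Fin.ext; simp

lemma rho_cons_iff (n : ℕ) (w : Fin (n+2) → Fin N) (j : Fin N) (x : Omega N A)
    (h : A j (x.1 0) = true) :
    rho N A (n+2) (cons N A j x h) = w ↔ (j = w 0 ∧ rho N A (n+1) x = Fin.tail w) := by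
  constructor
  · intro hh
    constructor
    · have h0 := congrFun hh 0
      simp only [rho, Fin.val_zero] at h0
      exact h0
    · funext k
      have hk := congrFun hh k.succ
      simp only [rho, Fin.val_succ] at hk
      exact hk
  · rintro ⟨h1, h2⟩
    funext m
    refine Fin.cases ?_ ?_ m
    · show (cons N A j x h).1 ((0 : Fin (n+2)) : ℕ) = w 0
      rw [Fin.val_zero]
      exact h1
    · intro k
      show (cons N A j x h).1 ((k.succ : Fin (n+2)) : ℕ) = w k.succ
      rw [Fin.val_succ]
      exact congrFun h2 k

section Llemmas

variable (L : LocallyConstant (Omega N A) ℤ →+ LocallyConstant (Omega N A) ℤ)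
variable (hL : ∀ (f : LocallyConstant (Omega N A) ℤ) (x : Omega N A),
      L f x = ∑ j : Fin N, if h : A j (x.1 0) = true then f (cons N A j x h) else 0)

include hL

lemma L_chi_one (i : Fin N) :
    L (chi N A 1 (fun _ => i))
      = ∑ k, (if A i k = true then (1:ℤ) else 0) • chi N A 1 (fun _ => k) := by
  ext x
  rw [hL, lcsum]
  have hterm : ∀ j, (if h : A j (x.1 0) = true
        then chi N A 1 (fun _ => i) (cons N A j x h) else 0)
      = if (A j (x.1 0) = true ∧ j = i) then (1:ℤ) else 0 := by
    intro j
    by_cases h : A j (x.1 0) = true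
    · rw [dif_pos h, chi_apply]
      have e : rho N A 1 (cons N A j x h) = fun _ => j := by
        funext k
        rw [Subsingleton.elim k 0]
        show (cons N A j x h).1 ((0 : Fin 1) : ℕ) = j
        rw [Fin.val_zero]
        rfl
      rw [e]
      have hiff : ((fun _ : Fin 1 => j) = fun _ => i) ↔ j = i :=
        ⟨fun hh => congrFun hh 0, fun hh => by rw [hh]⟩
      by_cases hj : j = i
      · rw [if_pos (hiff.mpr hj), if_pos ⟨h, hj⟩]
      · rw [if_neg (fun hh => hj (hiff.mp hh)), if_neg (fun hh => hj hh.2)]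
    · rw [dif_neg h, if_neg (fun hh => h hh.1)]
  have hterm2 : ∀ k, ((if A i k = true then (1:ℤ) else 0) • chi N A 1 (fun _ => k)) x
      = if (A i k = true ∧ x.1 0 = k) then (1:ℤ) else 0 := by
    intro k
    rw [LocallyConstant.smul_apply, chi_apply, smul_eq_mul]
    have hiff : (rho N A 1 x = fun _ => k) ↔ x.1 0 = k := by
      constructor
      · intro hh
        have := congrFun hh 0
        simp only [rho, Fin.val_zero] at this
        exact this
      · intro hh
        funext m
        rw [Subsingleton.elim m 0]
        show x.1 ((0 : Fin 1) : ℕ) = k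
        rw [Fin.val_zero]
        exact hh
    by_cases h1 : A i k = true <;> by_cases h2 : x.1 0 = k
    · rw [if_pos h1, if_pos (hiff.mpr h2), if_pos ⟨h1, h2⟩, mul_one]
    · rw [if_pos h1, if_neg (fun hh => h2 (hiff.mp hh)), if_neg (fun hh => h2 hh.2), mul_zero]
    · rw [if_neg h1, zero_mul, if_neg (fun hh : _ ∧ _ => h1 hh.1)]
    · rw [if_neg h1, zero_mul, if_neg (fun hh : _ ∧ _ => h1 hh.1)]
  rw [Finset.sum_congr rfl fun j _ => hterm j, Finset.sum_congr rfl fun k _ => hterm2 k,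
    Finset.sum_eq_single i (fun b _ hb => by rw [if_neg (fun hh => hb hh.2)])
      (fun habs => absurd (Finset.mem_univ i) habs),
    Finset.sum_eq_single (x.1 0) (fun b _ hb => by rw [if_neg (fun hh => hb hh.2.symm)])
      (fun habs => absurd (Finset.mem_univ _) habs)]
  by_cases hAi : A i (x.1 0) = true
  · rw [if_pos ⟨hAi, rfl⟩, if_pos ⟨hAi, rfl⟩]
  · rw [if_neg (fun hh => hAi hh.1), if_neg (fun hh => hAi hh.1)]

lemma L_chi_succ (n : ℕ) (w : Fin (n+2) → Fin N) :
    L (chi N A (n+2) w)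
      = if A (w 0) (w 1) = true then chi N A (n+1) (Fin.tail w) else 0 := by
  ext x
  rw [hL]
  have hterm : ∀ j, (if h : A j (x.1 0) = true
        then chi N A (n+2) w (cons N A j x h) else 0)
      = if (A j (x.1 0) = true ∧ j = w 0 ∧ rho N A (n+1) x = Fin.tail w) then (1:ℤ) else 0 := by
    intro j
    by_cases h : A j (x.1 0) = true
    · rw [dif_pos h, chi_apply]
      by_cases hc : j = w 0 ∧ rho N A (n+1) x = Fin.tail w
      · rw [if_pos ((rho_cons_iff N A n w j x h).mpr hc), if_pos ⟨h, hc⟩]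
      · rw [if_neg (fun hh => hc ((rho_cons_iff N A n w j x h).mp hh)),
          if_neg (fun hh => hc hh.2)]
    · rw [dif_neg h, if_neg (fun hh => h hh.1)]
  rw [Finset.sum_congr rfl fun j _ => hterm j,
    Finset.sum_eq_single (w 0) (fun b _ hb => by rw [if_neg (fun hh => hb hh.2.1)])
      (fun habs => absurd (Finset.mem_univ _) habs)]
  by_cases hr : rho N A (n+1) x = Fin.tail w
  · have hx0 : x.1 0 = w 1 := by
      have := congrFun hr 0
      simp only [rho, Fin.val_zero] at this
      rw [this]
      show w ((0 : Fin (n+1)).succ) = w 1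
      rw [succ0]
    by_cases hA : A (w 0) (w 1) = true
    · rw [if_pos ⟨by rw [hx0]; exact hA, rfl, hr⟩, if_pos hA, chi_apply, if_pos hr]
    · rw [if_neg (fun hh => hA (by rw [← hx0]; exact hh.1)), if_neg hA]
      rfl
  · rw [if_neg (fun hh => hr hh.2.2)]
    by_cases hA : A (w 0) (w 1) = true
    · rw [if_pos hA, chi_apply, if_neg hr]
    · rw [if_neg hA]
      rfl

end Llemmas

lemma solvable
    (L : LocallyConstant (Omega N A) ℤ →+ LocallyConstant (Omega N A) ℤ)
    (hL : ∀ (f : LocallyConstant (Omega N A) ℤ) (x : Omega N A),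
      L f x = ∑ j : Fin N, if h : A j (x.1 0) = true then f (cons N A j x h) else 0)
    (φ : LocallyConstant (Omega N A) ℤ →+ ℤ) (u : Fin N → ℤ)
    (hTu : ∀ i, u i - ∑ k, (if A i k = true then (1:ℤ) else 0) * u k
      = φ (chi N A 1 (fun _ => i))) :
    ∃ ψ : LocallyConstant (Omega N A) ℤ →+ ℤ, ∀ f, ψ f - ψ (L f) = φ f := by
  have hud : ∀ i, ¬ Live N A i → u i = 0 := by
    have main : ∀ d (i : Fin N), ¬ Live N A i → dlev N A i < d → u i = 0 := by
      intro d
      induction d with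
      | zero => intro i _ hd; omega
      | succ d ih =>
          intro i hi hd
          have h0 : φ (chi N A 1 (fun _ => i)) = 0 := by
            rw [chi_dead_eq_zero N A 1 (fun _ => i)
              (fun hl => hi ((liveW_one_iff N A (fun _ => i)).mp hl)), map_zero]
          have hsum : ∑ k, (if A i k = true then (1:ℤ) else 0) * u k = 0 :=
            Finset.sum_eq_zero fun k _ => by
              by_cases hA : A i k = true
              · rw [if_pos hA, one_mul,
                  ih k (succ_dead N A hi hA) (by have := succ_dlev N A hi hA; omega)]
              · rw [if_neg hA, zero_mul]
          have hh := hTu i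
          rw [h0, hsum] at hh
          linarith
    intro i hi
    exact main (dlev N A i + 1) i hi (by omega)
  have hadd : ∀ f g : LocallyConstant (Omega N A) ℤ,
      psiF N A φ u (f + g) = psiF N A φ u f + psiF N A φ u g := by
    intro f g
    have h1 : IsLev N A (f+g) (max (lev N A (f+g)) (max (lev N A f) (lev N A g))) :=
      isLev_mono N A (lev_spec N A _) (le_max_left _ _)
    have h2 : IsLev N A f (max (lev N A (f+g)) (max (lev N A f) (lev N A g))) :=
      isLev_mono N A (lev_spec N A _) (le_trans (le_max_left _ _) (le_max_right _ _))
    have h3 : IsLev N A g (max (lev N A (f+g)) (max (lev N A f) (lev N A g))) :=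
      isLev_mono N A (lev_spec N A _) (le_trans (le_max_right _ _) (le_max_right _ _))
    rw [← psiAt_eq N A φ u hud hTu h1, ← psiAt_eq N A φ u hud hTu h2,
      ← psiAt_eq N A φ u hud hTu h3]
    unfold psiAt
    rw [← Finset.sum_add_distrib]
    exact Finset.sum_congr rfl fun w _ => by rw [val_add, mul_add]
  refine ⟨AddMonoidHom.mk' (fun f => psiF N A φ u f) hadd, ?_⟩
  set ψ : LocallyConstant (Omega N A) ℤ →+ ℤ := AddMonoidHom.mk' (fun f => psiF N A φ u f) hadd
    with hψdef
  have hψ : ∀ g, ψ g = psiF N A φ u g := fun g => rfl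
  have key : ∀ (m : ℕ) (w : Fin (m+1) → Fin N),
      ψ (chi N A (m+1) w) - ψ (L (chi N A (m+1) w)) = φ (chi N A (m+1) w) := by
    intro m w
    cases m with
    | zero =>
        rw [chi_one_eta N A w, L_chi_one N A L hL (w 0), map_sum]
        have hterm : ∀ k, ψ ((if A (w 0) k = true then (1:ℤ) else 0) • chi N A 1 (fun _ => k))
            = (if A (w 0) k = true then (1:ℤ) else 0) * u k := by
          intro k
          rw [map_zsmul, smul_eq_mul]
          congr 1
          rw [hψ, psiF_chi N A φ u hud hTu 0 (fun _ => k), psi_one]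
        rw [Finset.sum_congr rfl fun k _ => hterm k, hψ,
          psiF_chi N A φ u hud hTu 0 (fun _ => w 0), psi_one]
        exact hTu (w 0)
    | succ m =>
        rw [L_chi_succ N A L hL m w]
        by_cases hA : A (w 0) (w 1) = true
        · rw [if_pos hA, hψ, hψ, psiF_chi N A φ u hud hTu (m+1) w,
            psiF_chi N A φ u hud hTu m (Fin.tail w), psi_two]
          by_cases hlw : LiveW N A (m+2) w
          · rw [if_pos hlw]
            ring
          · rw [if_neg hlw, chi_dead_eq_zero N A _ _ hlw, map_zero]
            have hnl : ¬ LiveW N A (m+1) (Fin.tail w) := by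
              rintro ⟨x, hx⟩
              have hx0 : x.1 0 = w 1 := by
                have hc := congrFun hx 0
                simp only [rho, Fin.val_zero] at hc
                rw [hc]
                show w ((0 : Fin (m+1)).succ) = w 1
                rw [succ0]
              have hcons : A (w 0) (x.1 0) = true := by rw [hx0]; exact hA
              exact hlw ⟨cons N A (w 0) x hcons,
                (rho_cons_iff N A m w (w 0) x hcons).mpr ⟨rfl, hx⟩⟩
            rw [psi_not_live N A φ u hud m (Fin.tail w) hnl]
            ring
        · rw [if_neg hA, map_zero, sub_zero]
          have hlw : ¬ LiveW N A (m+2) w := by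
            intro hlw
            obtain ⟨hadm, -⟩ := (liveW_iff N A (m+1) w).mp hlw
            have hc := hadm 0
            rw [cast0, succ0] at hc
            exact hA hc
          rw [hψ, psiF_chi N A φ u hud hTu (m+1) w, psi_two, if_neg hlw,
            chi_dead_eq_zero N A _ _ hlw, map_zero]
  intro f
  have hf : IsLev N A f (lev N A f + 1) :=
    isLev_mono N A (lev_spec N A f) (by omega)
  have hdec := decomp N A f hf
  rw [hdec, map_sum, map_sum, map_sum, map_sum]
  simp only [map_zsmul, smul_eq_mul]
  rw [← Finset.sum_sub_distrib]
  refine Finset.sum_congr rfl fun w _ => ?_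
  rw [← mul_sub]
  congr 1
  exact key (lev N A f) w


/-- The cokernel of `1 - 𝔏* : Hom(C(Ω_A,ℤ),ℤ) → Hom(C(Ω_A,ℤ),ℤ)` is isomorphic to
`ℤ^N/(1-A)ℤ^N`.  Here `C(Ω_A,ℤ)` is realised as the locally constant ℤ-valued
functions on Ω_A, `L` is the transfer operator `𝔏(f)(x) = Σ_{σ(y)=x} f(y)`,
`Lstar` its dual `φ ↦ φ ∘ L`, and `T = 1 - A` acting on `ℤ^N`. -/
theorem stmt15
    (L : LocallyConstant (Omega N A) ℤ →+ LocallyConstant (Omega N A) ℤ)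
    (hL : ∀ (f : LocallyConstant (Omega N A) ℤ) (x : Omega N A),
      L f x = ∑ j : Fin N, if h : A j (x.1 0) = true then f (cons N A j x h) else 0)
    (Lstar : (LocallyConstant (Omega N A) ℤ →+ ℤ) →+ (LocallyConstant (Omega N A) ℤ →+ ℤ))
    (hLstar : ∀ (φ : LocallyConstant (Omega N A) ℤ →+ ℤ) (f : LocallyConstant (Omega N A) ℤ),
      Lstar φ f = φ (L f))
    (T : (Fin N → ℤ) →+ (Fin N → ℤ))
    (hT : ∀ (v : Fin N → ℤ) (i : Fin N),
      T v i = v i - ∑ j : Fin N, (if A i j = true then (1 : ℤ) else 0) * v j) :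
    Nonempty (
      ((LocallyConstant (Omega N A) ℤ →+ ℤ) ⧸ (AddMonoidHom.id _ - Lstar).range)
        ≃+ ((Fin N → ℤ) ⧸ T.range)) := by
  classical
  set onemin : ((LocallyConstant (Omega N A) ℤ →+ ℤ) →+ (LocallyConstant (Omega N A) ℤ →+ ℤ)) :=
    AddMonoidHom.id (LocallyConstant (Omega N A) ℤ →+ ℤ) - Lstar with honemin
  have honem : ∀ (ψ : LocallyConstant (Omega N A) ℤ →+ ℤ) (f : LocallyConstant (Omega N A) ℤ),
      (onemin ψ) f = ψ f - ψ (L f) := by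
    intro ψ f
    rw [honemin, AddMonoidHom.sub_apply, AddMonoidHom.sub_apply, AddMonoidHom.id_apply, hLstar]
  -- the comparison map Φ
  set Phi : (LocallyConstant (Omega N A) ℤ →+ ℤ) →+ (Fin N → ℤ) :=
    AddMonoidHom.mk' (fun φ => fun i => φ (chi N A 1 (fun _ => i)))
      (fun φ1 φ2 => by
        funext i
        show (φ1 + φ2) (chi N A 1 (fun _ => i))
          = ((fun i => φ1 (chi N A 1 (fun _ => i))) + fun i => φ2 (chi N A 1 (fun _ => i))) i
        rw [AddMonoidHom.add_apply, Pi.add_apply]) with hPhidef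
  have hPhi : ∀ (φ : LocallyConstant (Omega N A) ℤ →+ ℤ) (i : Fin N),
      Phi φ i = φ (chi N A 1 (fun _ => i)) := fun φ i => rfl
  -- Φ intertwines (1 - L*) with T
  have hcomm : ∀ ψ : LocallyConstant (Omega N A) ℤ →+ ℤ,
      Phi (onemin ψ) = T (Phi ψ) := by
    intro ψ
    funext i
    rw [hPhi, hT, honem, L_chi_one N A L hL i, map_sum]
    simp only [map_zsmul, smul_eq_mul]
    rfl
  -- forward inclusion
  have hle : onemin.range ≤ AddSubgroup.comap Phi T.range := by
    rintro φ ⟨ψ, rfl⟩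
    exact ⟨Phi ψ, (hcomm ψ).symm⟩
  -- converse
  have hback : ∀ φ : LocallyConstant (Omega N A) ℤ →+ ℤ,
      Phi φ ∈ T.range → φ ∈ onemin.range := by
    intro φ ⟨u, hu⟩
    have hTu : ∀ i, u i - ∑ k, (if A i k = true then (1:ℤ) else 0) * u k
        = φ (chi N A 1 (fun _ => i)) := by
      intro i
      have := congrFun hu i
      rw [hT] at this
      rw [this, hPhi]
    obtain ⟨ψ, hψ⟩ := solvable N A L hL φ u hTu
    refine ⟨ψ, ?_⟩
    ext f
    rw [honem]
    exact hψ f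
  -- evaluation functionals give the live generators
  have hlive_mem : ∀ i : Fin N, Live N A i →
      Pi.single i (1:ℤ) ∈ Phi.range ⊔ T.range := by
    rintro i ⟨x, hx0⟩
    refine AddSubgroup.mem_sup_left ⟨AddMonoidHom.mk' (fun f => f x)
      (fun f g => LocallyConstant.add_apply f g x), ?_⟩
    funext k
    rw [hPhi]
    show chi N A 1 (fun _ => k) x = _
    rw [chi_apply, Pi.single_apply]
    have hiff : (rho N A 1 x = fun _ => k) ↔ x.1 0 = k := by
      constructor
      · intro hh
        have := congrFun hh 0
        simp only [rho, Fin.val_zero] at this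
        exact this
      · intro hh
        funext m
        rw [Subsingleton.elim m 0]
        show x.1 ((0 : Fin 1) : ℕ) = k
        rw [Fin.val_zero]
        exact hh
    by_cases hk : k = i
    · rw [if_pos (hiff.mpr (by rw [hx0, hk])), if_pos hk]
    · rw [if_neg (fun hh => hk (by rw [← hx0]; exact (hiff.mp hh).symm)), if_neg hk]
  -- the basic relation in the cokernel
  have hid : ∀ i : Fin N, Pi.single i (1:ℤ)
      = T (Pi.single i 1) + ∑ j, (if A j i = true then (1:ℤ) else 0) • Pi.single j (1:ℤ) := by
    intro i
    funext k
    rw [Pi.add_apply, hT]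
    have e1 : ∑ j, (if A k j = true then (1:ℤ) else 0) * Pi.single (M := fun _ => ℤ) i 1 j
        = if A k i = true then 1 else 0 := by
      rw [Finset.sum_eq_single i]
      · rw [Pi.single_eq_same, mul_one]
      · intro b _ hb
        rw [Pi.single_eq_of_ne hb, mul_zero]
      · intro habs; exact absurd (Finset.mem_univ _) habs
    have e2 : (∑ j, (if A j i = true then (1:ℤ) else 0) • Pi.single j (1:ℤ)) k
        = if A k i = true then 1 else 0 := by
      rw [Finset.sum_apply]
      rw [Finset.sum_eq_single k]
      · rw [Pi.smul_apply, Pi.single_eq_same, smul_eq_mul, mul_one]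
      · intro b _ hb
        rw [Pi.smul_apply, Pi.single_eq_of_ne (Ne.symm hb), smul_zero]
      · intro habs; exact absurd (Finset.mem_univ _) habs
    rw [e1, e2]
    ring
  -- all generators lie in the sup
  have hsingle : ∀ i : Fin N, Pi.single i (1:ℤ) ∈ Phi.range ⊔ T.range := by
    have main : ∀ d (i : Fin N), ¬ Live N A i → N < dlev N A i + d →
        Pi.single i (1:ℤ) ∈ Phi.range ⊔ T.range := by
      intro d
      induction d with
      | zero =>
          intro i hi hd
          have := dead_dlev_le N A hi
          omega
      | succ d ih =>
          intro i hi hd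
          rw [hid i]
          refine AddSubgroup.add_mem _
            (AddSubgroup.mem_sup_right ⟨Pi.single (M := fun _ => ℤ) i 1, rfl⟩) ?_
          refine AddSubgroup.sum_mem _ fun j _ => ?_
          by_cases hA : A j i = true
          · rw [if_pos hA, one_smul]
            by_cases hj : Live N A j
            · exact hlive_mem j hj
            · refine ih j hj ?_
              have := pred_dlev N A hi hj hA
              omega
          · rw [if_neg hA, zero_smul]
            exact AddSubgroup.zero_mem _
    intro i
    by_cases hlive : Live N A i
    · exact hlive_mem i hlive
    · exact main (N+1) i hlive (by omega)
  have hS : ∀ v : Fin N → ℤ, v ∈ Phi.range ⊔ T.range := by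
    intro v
    rw [← Finset.univ_sum_single v]
    refine AddSubgroup.sum_mem _ fun i _ => ?_
    have e : Pi.single i (v i) = v i • Pi.single (M := fun _ => ℤ) i 1 := by
      rw [← Pi.single_smul, smul_eq_mul, mul_one]
    rw [e]
    exact AddSubgroup.zsmul_mem _ (hsingle i) _
  -- the induced map on quotients
  set F := QuotientAddGroup.map onemin.range T.range Phi hle with hF
  have hinj : Function.Injective F := by
    rw [injective_iff_map_eq_zero]
    intro q
    refine QuotientAddGroup.induction_on q ?_
    intro φ hφ
    rw [hF, QuotientAddGroup.map_mk, QuotientAddGroup.eq_zero_iff] at hφ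
    rw [QuotientAddGroup.eq_zero_iff]
    exact hback φ hφ
  have hsurj : Function.Surjective F := by
    intro q
    refine QuotientAddGroup.induction_on q ?_
    intro v
    obtain ⟨y, hy, z, hz, hyz⟩ := (AddSubgroup.mem_sup).mp (hS v)
    obtain ⟨φ, rfl⟩ := AddMonoidHom.mem_range.mp hy
    refine ⟨↑φ, ?_⟩
    rw [hF, QuotientAddGroup.map_mk, QuotientAddGroup.eq_iff_sub_mem]
    have e : Phi φ - v = -z := by
      rw [← hyz]; ring
    rw [e]
    exact AddSubgroup.neg_mem _ hz
  exact ⟨AddEquiv.ofBijective F ⟨hinj, hsurj⟩⟩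


end Stmt15
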